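/- arXiv:2508.04654 — 2 statements merged into one kernel-verified Lean document; each statement's English description precedes it below -/
import Mathlib

section
/- Let d ≥ 1, p ∈ [1,∞] with conjugate exponent p* (1/p + 1/p* = 1), and let C ⊆ ℝ^d be a compact convex set. Let ψ be differentiable on an open convex set containing C and λ-strongly convex with respect to the ℓ_p-norm for some λ > 0. Fix y ∈ C, g ∈ ℝ^d, η > 0, and let y⁺ be a minimizer over z ∈ C of ⟨g, z⟩ + (1/η)·B_ψ(z; y). Then for every v ∈ C, η·⟨g, y − v⟩ ≤ B_ψ(v; y) − B_ψ(v; y⁺) + (η²/(2λ))·‖g‖_{p*}². -/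
open scoped ENNReal RealInnerProductSpace

/-- The ℓ_p norm on `ℝ^d`, for `p ∈ [1, ∞]` (with `‖x‖_∞ = max_i |x i|`). -/
noncomputable def lpnorm {d : ℕ} (p : ℝ≥0∞) (x : EuclideanSpace ℝ (Fin d)) : ℝ :=
  if p = ∞ then ⨆ i, |x i| else (∑ i, |x i| ^ p.toReal) ^ (1 / p.toReal)

/-- The Bregman divergence `B_ψ(x; y) = ψ(x) - ψ(y) - ⟪∇ψ(y), x - y⟫`. -/
noncomputable def breg {d : ℕ} (ψ : EuclideanSpace ℝ (Fin d) → ℝ)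
    (x y : EuclideanSpace ℝ (Fin d)) : ℝ :=
  ψ x - ψ y - ⟪gradient ψ y, x - y⟫

lemma lpnorm_sub_comm {d : ℕ} (p : ℝ≥0∞) (x y : EuclideanSpace ℝ (Fin d)) :
    lpnorm p (x - y) = lpnorm p (y - x) := by
  have h : ∀ i, |(x - y) i| = |(y - x) i| := by
    intro i
    simp only [PiLp.sub_apply]
    exact abs_sub_comm _ _
  simp only [lpnorm]
  split_ifs with hp
  · exact iSup_congr h
  · congr 1
    exact Finset.sum_congr rfl fun i _ => by rw [h i]

lemma hoelder {d : ℕ} (hd : 1 ≤ d) (p ps : ℝ≥0∞) (hp : 1 ≤ p)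
    (hconj : 1 / p + 1 / ps = 1) (g x : EuclideanSpace ℝ (Fin d)) :
    ⟪g, x⟫ ≤ lpnorm ps g * lpnorm p x := by
  have hne : Nonempty (Fin d) := ⟨⟨0, hd⟩⟩
  have hinner : ⟪g, x⟫ = ∑ i, g i * x i := by
    simp [PiLp.inner_apply, RCLike.inner_apply, mul_comm]
  by_cases hp1 : p = 1
  · -- p = 1, ps = ∞
    have hps : ps = ∞ := by
      rw [hp1] at hconj
      simp only [one_div, inv_one] at hconj
      have h0 : (1:ℝ≥0∞) + ps⁻¹ = 1 + 0 := by rw [add_zero]; exact hconj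
      have h1 := (ENNReal.add_right_inj ENNReal.one_ne_top).mp h0
      rwa [ENNReal.inv_eq_zero] at h1
    rw [hps, hp1]
    simp only [lpnorm, ENNReal.one_ne_top, if_false, if_true, ENNReal.toReal_one,
      Real.rpow_one, one_div_one]
    rw [hinner]
    have hbdd : BddAbove (Set.range fun i => |g i|) := (Set.finite_range _).bddAbove
    have hsup_nonneg : 0 ≤ ⨆ i, |g i| := le_ciSup_of_le hbdd (Classical.arbitrary _) (abs_nonneg _)
    calc ∑ i, g i * x i ≤ ∑ i, |g i| * |x i| := by
          apply Finset.sum_le_sum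
          intro i _
          rw [← abs_mul]
          exact le_abs_self _
      _ ≤ ∑ i, (⨆ j, |g j|) * |x i| := by
          apply Finset.sum_le_sum
          intro i _
          exact mul_le_mul_of_nonneg_right (le_ciSup hbdd i) (abs_nonneg _)
      _ = (⨆ i, |g i|) * ∑ i, |x i| := by rw [Finset.mul_sum]
  by_cases hpt : p = ∞
  · -- p = ∞, ps = 1
    have hps : ps = 1 := by
      rw [hpt] at hconj
      simp only [one_div, ENNReal.inv_top, zero_add] at hconj
      rwa [ENNReal.inv_eq_one] at hconj
    rw [hps, hpt]
    simp only [lpnorm, ENNReal.one_ne_top, if_false, if_true, ENNReal.toReal_one,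
      Real.rpow_one, one_div_one]
    rw [hinner]
    have hbdd : BddAbove (Set.range fun i => |x i|) := (Set.finite_range _).bddAbove
    calc ∑ i, g i * x i ≤ ∑ i, |g i| * |x i| := by
          apply Finset.sum_le_sum
          intro i _
          rw [← abs_mul]
          exact le_abs_self _
      _ ≤ ∑ i, |g i| * (⨆ j, |x j|) := by
          apply Finset.sum_le_sum
          intro i _
          exact mul_le_mul_of_nonneg_left (le_ciSup hbdd i) (abs_nonneg _)
      _ = (∑ i, |g i|) * (⨆ i, |x i|) := by rw [← Finset.sum_mul]
  · -- 1 < p < ∞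
    have hp1' : 1 < p := lt_of_le_of_ne hp (Ne.symm hp1)
    have hpinv_lt : p⁻¹ < 1 := by
      rw [ENNReal.inv_lt_one]
      exact hp1'
    have hps_ne_top : ps ≠ ∞ := by
      intro h
      rw [h] at hconj
      simp only [one_div, ENNReal.inv_top, add_zero] at hconj
      rw [ENNReal.inv_eq_one] at hconj
      exact hp1 hconj
    have hps_ne_zero : ps ≠ 0 := by
      intro h
      rw [h] at hconj
      simp at hconj
    have hp_ne_zero : p ≠ 0 := (zero_lt_one.trans_le hp).ne'
    have hpR : 1 < p.toReal := by
      rw [← ENNReal.toReal_one]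
      exact (ENNReal.toReal_lt_toReal ENNReal.one_ne_top hpt).mpr hp1'
    have hconjR : 1 / p.toReal + 1 / ps.toReal = 1 := by
      have h1 : ((1 / p : ℝ≥0∞) + 1 / ps).toReal = (1 : ℝ≥0∞).toReal := by rw [hconj]
      rw [ENNReal.toReal_add (by simpa [one_div] using ENNReal.inv_ne_top.mpr hp_ne_zero)
        (by simpa [one_div] using ENNReal.inv_ne_top.mpr hps_ne_zero), ENNReal.toReal_one] at h1
      simpa [one_div, ENNReal.toReal_inv] using h1
    have hpq : (ps.toReal).HolderConjugate p.toReal := by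
      rw [Real.holderConjugate_iff]
      constructor
      · -- 1 < ps.toReal
        have hpsR_pos : 0 < ps.toReal := ENNReal.toReal_pos hps_ne_zero hps_ne_top
        by_contra h
        push_neg at h
        have h2 : 1 ≤ 1 / ps.toReal := by
          rw [le_div_iff₀ hpsR_pos]
          linarith
        have h3 : 0 < 1 / p.toReal := one_div_pos.mpr (by linarith)
        linarith
      · simp only [one_div] at hconjR ⊢
        linarith
    have hlp : lpnorm p x = (∑ i, |x i| ^ p.toReal) ^ (1 / p.toReal) := by
      simp [lpnorm, hpt]
    have hlps : lpnorm ps g = (∑ i, |g i| ^ ps.toReal) ^ (1 / ps.toReal) := by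
      simp [lpnorm, hps_ne_top]
    rw [hinner, hlp, hlps]
    exact Real.inner_le_Lp_mul_Lq Finset.univ (fun i => g i) (fun i => x i) hpq

theorem stmt_3 (d : ℕ) (hd : 1 ≤ d) (p ps : ℝ≥0∞) (hp : 1 ≤ p)
    (hconj : 1 / p + 1 / ps = 1)
    (C U : Set (EuclideanSpace ℝ (Fin d)))
    (hCcomp : IsCompact C) (hCconv : Convex ℝ C)
    (hUopen : IsOpen U) (hUconv : Convex ℝ U) (hCU : C ⊆ U)
    (ψ : EuclideanSpace ℝ (Fin d) → ℝ)
    (hdiff : ∀ x ∈ U, DifferentiableAt ℝ ψ x)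
    (lam : ℝ) (hlam : 0 < lam)
    (hsc : ∀ x ∈ U, ∀ w ∈ U,
      ψ w + ⟪gradient ψ w, x - w⟫ + lam / 2 * (lpnorm p (x - w)) ^ 2 ≤ ψ x)
    (y : EuclideanSpace ℝ (Fin d)) (hy : y ∈ C)
    (g : EuclideanSpace ℝ (Fin d)) (η : ℝ) (hη : 0 < η)
    (yp : EuclideanSpace ℝ (Fin d)) (hypC : yp ∈ C)
    (hmin : ∀ z ∈ C, ⟪g, yp⟫ + (1 / η) * breg ψ yp y ≤ ⟪g, z⟫ + (1 / η) * breg ψ z y) :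
    ∀ v ∈ C, η * ⟪g, y - v⟫ ≤
      breg ψ v y - breg ψ v yp + η ^ 2 / (2 * lam) * (lpnorm ps g) ^ 2 := by
  intro v hv
  have hypU : yp ∈ U := hCU hypC
  have hyU : y ∈ U := hCU hy
  set gy := gradient ψ y with hgy
  set gyp := gradient ψ yp with hgyp
  set w := v - yp with hw
  set c : ℝ → EuclideanSpace ℝ (Fin d) := fun t => yp + t • w with hc_def
  set φ : ℝ → ℝ := fun t => η * ⟪g, c t⟫ + breg ψ (c t) y with hφ_def
  have hc0 : c 0 = yp := by simp [hc_def]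
  -- φ 0 is a minimum on [0,1]
  have hφmin : ∀ t ∈ Set.Icc (0:ℝ) 1, φ 0 ≤ φ t := by
    intro t ht
    have hct : c t ∈ C := hCconv.add_smul_sub_mem hypC hv ht
    have h2 := hmin (c t) hct
    have h3 := mul_le_mul_of_nonneg_left h2 hη.le
    have hηne : η ≠ 0 := hη.ne'
    simp only [hφ_def, hc0]
    rw [mul_add, mul_add] at h3
    rw [← mul_assoc, ← mul_assoc, mul_one_div_cancel hηne, one_mul, one_mul] at h3
    exact h3
  -- derivative of φ at 0
  have hcd : HasDerivAt c w 0 := by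
    have := ((hasDerivAt_id (0:ℝ)).smul_const w).const_add yp
    simp only [one_smul] at this
    exact this
  have hψfd : HasFDerivAt ψ (InnerProductSpace.toDual ℝ _ gyp) (c 0) := by
    rw [hc0]
    exact ((hdiff yp hypU).hasGradientAt).hasFDerivAt
  have hψd : HasDerivAt (fun t => ψ (c t)) ⟪gyp, w⟫ 0 := by
    have := hψfd.comp_hasDerivAt 0 hcd
    simpa [Function.comp_def, InnerProductSpace.toDual_apply_apply] using this
  have hg1 : HasDerivAt (fun t => ⟪g, c t⟫) ⟪g, w⟫ 0 := by
    have := (innerSL ℝ g).hasFDerivAt.comp_hasDerivAt 0 hcd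
    simpa [Function.comp_def] using this
  have hg2 : HasDerivAt (fun t => ⟪gy, c t - y⟫) ⟪gy, w⟫ 0 := by
    have := (innerSL ℝ gy).hasFDerivAt.comp_hasDerivAt 0 (hcd.sub_const y)
    simpa [Function.comp_def] using this
  set D : ℝ := η * ⟪g, w⟫ + (⟪gyp, w⟫ - ⟪gy, w⟫) with hD_def
  have hφd : HasDerivAt φ D 0 := by
    have h1 : HasDerivAt (fun t => η * ⟪g, c t⟫ + (ψ (c t) - ψ y - ⟪gy, c t - y⟫)) D 0 :=
      (hg1.const_mul η).add ((hψd.sub_const (ψ y)).sub hg2)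
    simp only [hφ_def, breg, ← hgy]
    exact h1
  -- D ≥ 0 from minimality
  have hD : 0 ≤ D := by
    have hslope : Filter.Tendsto (slope φ 0) (nhdsWithin 0 {x | x ≠ 0}) (nhds D) :=
      hasDerivAt_iff_tendsto_slope.mp hφd
    have h2 : Filter.Tendsto (slope φ 0) (nhdsWithin 0 (Set.Ioi 0)) (nhds D) :=
      hslope.mono_left (nhdsWithin_mono 0 (fun x hx => (ne_of_gt hx)))
    refine ge_of_tendsto h2 ?_
    filter_upwards [Ioo_mem_nhdsGT_of_mem (by norm_num : (0:ℝ) ∈ Set.Ico 0 1)] with t ht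
    have hle := hφmin t ⟨ht.1.le, ht.2.le⟩
    rw [slope_def_field]
    have : 0 < t - 0 := by linarith [ht.1]
    apply div_nonneg (by linarith) this.le
  -- three-point identity
  have h3pt : ⟪gyp, w⟫ - ⟪gy, w⟫ = breg ψ v y - breg ψ v yp - breg ψ yp y := by
    simp only [breg, hw, ← hgy, ← hgyp, inner_sub_right]
    ring
  -- Hölder
  have hH : ⟪g, y - yp⟫ ≤ lpnorm ps g * lpnorm p (y - yp) :=
    hoelder hd p ps hp hconj g (y - yp)
  -- strong convexity
  have hB : lam / 2 * (lpnorm p (y - yp)) ^ 2 ≤ breg ψ yp y := by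
    have h1 := hsc yp hypU y hyU
    rw [lpnorm_sub_comm]
    simp only [breg, ← hgy]
    linarith
  -- AM-GM
  set Ng := lpnorm ps g with hNg
  set N := lpnorm p (y - yp) with hN
  have hamgm : η * (Ng * N) ≤ η ^ 2 / (2 * lam) * Ng ^ 2 + lam / 2 * N ^ 2 := by
    have hsq := sq_nonneg (η * Ng - lam * N)
    have h2l : 0 < 2 * lam := by linarith
    rw [← sub_nonneg]
    have key : η ^ 2 / (2 * lam) * Ng ^ 2 + lam / 2 * N ^ 2 - η * (Ng * N)
        = (η * Ng - lam * N) ^ 2 / (2 * lam) := by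
      field_simp
      ring
    rw [key]
    positivity
  -- assemble
  have hinmul : η * ⟪g, y - v⟫ = η * ⟪g, y - yp⟫ - η * ⟪g, w⟫ := by
    have : ⟪g, y - v⟫ = ⟪g, y - yp⟫ - ⟪g, w⟫ := by
      have hyv : y - v = (y - yp) - w := by rw [hw]; abel
      rw [hyv, inner_sub_right]
    rw [this]; ring
  have hstep1 : η * ⟪g, y - yp⟫ ≤ η * (Ng * N) := mul_le_mul_of_nonneg_left hH hη.le
  have hstep2 : -(η * ⟪g, w⟫) ≤ breg ψ v y - breg ψ v yp - breg ψ yp y := by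
    rw [← h3pt]; linarith [hD]
  rw [hinmul]
  linarith
end

section
/- Let d ≥ 1, p ∈ [1,∞] with conjugate exponent p*, and let C ⊆ ℝ^d be a compact convex set. Let ψ be differentiable on an open convex set containing C and λ-strongly convex with respect to the ℓ_p-norm for some λ > 0. Let η > 0, let g_1, …, g_T ∈ ℝ^d, let y_1 ∈ C, and for each t = 1, …, T let y_{t+1} be a minimizer over z ∈ C of ⟨g_t, z⟩ + (1/η)·B_ψ(z; y_t). Let v_1, …, v_{T+1} ∈ C be arbitrary comparators. Define F_ψ = sup_{x ∈ C} ψ(x) − inf_{x ∈ C} ψ(x) and G_ψ = max_{1 ≤ t ≤ T+1} ‖∇ψ(y_t)‖_{p*}. Then Σ_{t=1}^T ⟨g_t, y_t − v_t⟩ ≤ (F_ψ + B_ψ(v_1; y_1))/η + (G_ψ/η)·Σ_{t=1}^T ‖v_t − v_{t+1}‖_p + (η/(2λ))·Σ_{t=1}^T ‖g_t‖_{p*}². -/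
open scoped ENNReal RealInnerProductSpace

lemma lpnorm_nonneg {d : ℕ} (p : ℝ≥0∞) (x : EuclideanSpace ℝ (Fin d)) : 0 ≤ lpnorm p x := by
  unfold lpnorm; split
  · exact Real.iSup_nonneg fun i => abs_nonneg _
  · positivity

lemma holder {d : ℕ} {p ps : ℝ≥0∞} (hp : 1 ≤ p) (hconj : 1 / p + 1 / ps = 1)
    (a b : EuclideanSpace ℝ (Fin d)) : ⟪a, b⟫ ≤ lpnorm ps a * lpnorm p b := by
  have hc : p.HolderConjugate ps :=
    ENNReal.holderConjugate_iff.mpr (by rw [← one_div, ← one_div]; exact hconj)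
  have hinner : ⟪a, b⟫ = ∑ i, a i * b i := by
    simp [PiLp.inner_apply, RCLike.inner_apply, conj_trivial, mul_comm]
  have habs : ∑ i, a i * b i ≤ ∑ i, |a i| * |b i| := by
    refine Finset.sum_le_sum fun i _ => ?_
    rw [← abs_mul]; exact le_abs_self _
  rw [hinner]
  refine habs.trans ?_
  rcases eq_or_ne p 1 with rfl | hp1
  · -- ps = ∞
    have hps : ps = ∞ := by
      have h := (ENNReal.holderConjugate_iff.mp hc)
      simp only [inv_one] at h
      have h' : (1:ℝ≥0∞) + ps⁻¹ = 1 + 0 := by simpa using h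
      have : ps⁻¹ = 0 := (ENNReal.add_right_inj (by simp)).mp h'
      simpa using this
    subst hps
    simp only [lpnorm, if_pos rfl, if_neg (by simp : (1:ℝ≥0∞) ≠ ∞), ENNReal.toReal_one,
      Real.rpow_one, one_div_one]
    calc ∑ i, |a i| * |b i| ≤ ∑ i, (⨆ j, |a j|) * |b i| := by
          refine Finset.sum_le_sum fun i _ => ?_
          exact mul_le_mul_of_nonneg_right
            (le_ciSup (f := fun j => |a j|) (Finite.bddAbove_range _) i) (abs_nonneg _)
      _ = (⨆ j, |a j|) * ∑ i, |b i| := by rw [← Finset.mul_sum]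
  rcases eq_or_ne p ∞ with rfl | hptop
  · -- ps = 1
    have hps : ps = 1 := by
      have h := (ENNReal.holderConjugate_iff.mp hc)
      simpa [ENNReal.inv_eq_one] using h
    subst hps
    simp only [lpnorm, if_pos rfl, if_neg (by simp : (1:ℝ≥0∞) ≠ ∞), ENNReal.toReal_one,
      Real.rpow_one, one_div_one]
    calc ∑ i, |a i| * |b i| ≤ ∑ i, |a i| * (⨆ j, |b j|) := by
          refine Finset.sum_le_sum fun i _ => ?_
          exact mul_le_mul_of_nonneg_left
            (le_ciSup (f := fun j => |b j|) (Finite.bddAbove_range _) i) (abs_nonneg _)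
      _ = (∑ i, |a i|) * ⨆ j, |b j| := by rw [← Finset.sum_mul]
  · -- real conjugates
    have hpsne0 : ps ≠ 0 := ENNReal.HolderConjugate.ne_zero ps p
    have hpstop : ps ≠ ∞ := by
      intro h
      subst h
      have := (ENNReal.holderConjugate_iff.mp hc)
      simp only [ENNReal.inv_top, add_zero, ENNReal.inv_eq_one] at this
      exact hp1 this
    have h0p : p ≠ 0 := ENNReal.HolderConjugate.ne_zero p ps
    have hrr : p.toReal⁻¹ + ps.toReal⁻¹ = 1 := by
      have h := congrArg ENNReal.toReal (ENNReal.holderConjugate_iff.mp hc)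
      rwa [ENNReal.toReal_add (by simp [h0p]) (by simp [hpsne0]), ENNReal.toReal_inv,
        ENNReal.toReal_inv, ENNReal.toReal_one] at h
    have hpr : 1 < p.toReal := by
      rw [← ENNReal.toReal_one]
      exact (ENNReal.toReal_lt_toReal (by simp) hptop).mpr (lt_of_le_of_ne hp (Ne.symm hp1))
    have hrc : (ps.toReal).HolderConjugate (p.toReal) :=
      (Real.holderConjugate_iff.mpr ⟨hpr, hrr⟩).symm
    have := Real.inner_le_Lp_mul_Lq (Finset.univ) (fun i => |a i|) (fun i => |b i|) hrc
    simp only [abs_abs] at this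
    simpa [lpnorm, if_neg hpstop, if_neg hptop] using this

lemma grad_inner {d : ℕ} (ψ : EuclideanSpace ℝ (Fin d) → ℝ) (x v : EuclideanSpace ℝ (Fin d)) :
    ⟪gradient ψ x, v⟫ = fderiv ℝ ψ x v := by
  unfold gradient
  exact InnerProductSpace.toDual_symm_apply

lemma variational {d : ℕ} {C U : Set (EuclideanSpace ℝ (Fin d))}
    (hCconv : Convex ℝ C) (hCU : C ⊆ U)
    {ψ : EuclideanSpace ℝ (Fin d) → ℝ} (hdiff : ∀ x ∈ U, DifferentiableAt ℝ ψ x)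
    {η : ℝ} (gt x w z : EuclideanSpace ℝ (Fin d))
    (hx : x ∈ C) (hz : z ∈ C)
    (hmin : ∀ z' ∈ C, ⟪gt, x⟫ + (1 / η) * breg ψ x w ≤ ⟪gt, z'⟫ + (1 / η) * breg ψ z' w) :
    0 ≤ ⟪gt, z - x⟫ + (1 / η) * (⟪gradient ψ x, z - x⟫ - ⟪gradient ψ w, z - x⟫) := by
  set h : EuclideanSpace ℝ (Fin d) → ℝ :=
    fun u => ⟪gt, u⟫ + (1 / η) * (ψ u - ψ w - (⟪gradient ψ w, u⟫ - ⟪gradient ψ w, w⟫)) with hh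
  have hbreg : ∀ u, ⟪gt, u⟫ + (1 / η) * breg ψ u w = h u := by
    intro u
    simp only [hh, breg, inner_sub_right]
  have hminh : IsMinOn h C x := by
    intro u hu
    simp only [Set.mem_setOf_eq]
    rw [← hbreg, ← hbreg]
    exact hmin u hu
  set L : EuclideanSpace ℝ (Fin d) →L[ℝ] ℝ :=
    innerSL ℝ gt + (1 / η) • (fderiv ℝ ψ x - innerSL ℝ (gradient ψ w)) with hL
  have hder : HasFDerivAt h L x := by
    have h1 : HasFDerivAt (fun u : EuclideanSpace ℝ (Fin d) => ⟪gt, u⟫) (innerSL ℝ gt) x :=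
      (innerSL ℝ gt).hasFDerivAt
    have h2 : HasFDerivAt ψ (fderiv ℝ ψ x) x := (hdiff x (hCU hx)).hasFDerivAt
    have h3 : HasFDerivAt (fun u : EuclideanSpace ℝ (Fin d) => ⟪gradient ψ w, u⟫)
        (innerSL ℝ (gradient ψ w)) x := (innerSL ℝ (gradient ψ w)).hasFDerivAt
    have := h1.add ((((h2.sub_const (ψ w)).sub
      ((h3.sub_const ⟪gradient ψ w, w⟫))).const_mul (1 / η)))
    exact this
  have hcone : z - x ∈ posTangentConeAt C x :=
    sub_mem_posTangentConeAt_of_segment_subset (hCconv.segment_subset hx hz)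
  have := (hminh.localize).hasFDerivWithinAt_nonneg hder.hasFDerivWithinAt hcone
  rw [hL] at this
  simp only [ContinuousLinearMap.add_apply, ContinuousLinearMap.smul_apply,
    ContinuousLinearMap.sub_apply, innerSL_apply_apply, smul_eq_mul] at this
  rw [grad_inner]
  linarith

lemma tele (f : ℕ → ℝ) (T : ℕ) :
    ∑ t ∈ Finset.Icc 1 T, (f t - f (t + 1)) = f 1 - f (T + 1) := by
  induction T with
  | zero => simp
  | succ n ih => rw [Finset.sum_Icc_succ_top (by omega), ih]; ring

lemma tele' (f : ℕ → ℝ) (T : ℕ) :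
    ∑ t ∈ Finset.Icc 1 T, (f (t + 1) - f t) = f (T + 1) - f 1 := by
  have h : ∑ t ∈ Finset.Icc 1 T, (f (t + 1) - f t)
      = -∑ t ∈ Finset.Icc 1 T, (f t - f (t + 1)) := by
    rw [← Finset.sum_neg_distrib]
    exact Finset.sum_congr rfl fun _ _ => by ring
  rw [h, tele]; ring

theorem stmt_4 (d : ℕ) (hd : 1 ≤ d) (p ps : ℝ≥0∞) (hp : 1 ≤ p)
    (hconj : 1 / p + 1 / ps = 1)
    (C U : Set (EuclideanSpace ℝ (Fin d)))
    (hCcomp : IsCompact C) (hCconv : Convex ℝ C)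
    (hUopen : IsOpen U) (hUconv : Convex ℝ U) (hCU : C ⊆ U)
    (ψ : EuclideanSpace ℝ (Fin d) → ℝ)
    (hdiff : ∀ x ∈ U, DifferentiableAt ℝ ψ x)
    (lam : ℝ) (hlam : 0 < lam)
    (hsc : ∀ x ∈ U, ∀ w ∈ U,
      ψ w + ⟪gradient ψ w, x - w⟫ + lam / 2 * (lpnorm p (x - w)) ^ 2 ≤ ψ x)
    (η : ℝ) (hη : 0 < η) (T : ℕ) (hT : 1 ≤ T)
    (g y v : ℕ → EuclideanSpace ℝ (Fin d))
    (hy1 : y 1 ∈ C)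
    (hstep : ∀ t ∈ Finset.Icc 1 T, y (t + 1) ∈ C ∧
      ∀ z ∈ C, ⟪g t, y (t + 1)⟫ + (1 / η) * breg ψ (y (t + 1)) (y t) ≤
        ⟪g t, z⟫ + (1 / η) * breg ψ z (y t))
    (hv : ∀ t ∈ Finset.Icc 1 (T + 1), v t ∈ C) :
    ∑ t ∈ Finset.Icc 1 T, ⟪g t, y t - v t⟫ ≤
      (sSup (ψ '' C) - sInf (ψ '' C) + breg ψ (v 1) (y 1)) / η
      + (sSup ((fun t => lpnorm ps (gradient ψ (y t))) '' Set.Icc 1 (T + 1)) / η)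
          * ∑ t ∈ Finset.Icc 1 T, lpnorm p (v t - v (t + 1))
      + (η / (2 * lam)) * ∑ t ∈ Finset.Icc 1 T, (lpnorm ps (g t)) ^ 2 := by
  set G := sSup ((fun t => lpnorm ps (gradient ψ (y t))) '' Set.Icc 1 (T + 1)) with hGdef
  -- membership of iterates
  have hyC : ∀ t, 1 ≤ t → t ≤ T + 1 → y t ∈ C := by
    intro t h1 h2
    rcases Nat.eq_or_lt_of_le h1 with h | h
    · rw [← h]; exact hy1
    · obtain ⟨s, rfl⟩ : ∃ s, t = s + 1 := ⟨t - 1, by omega⟩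
      exact (hstep s (Finset.mem_Icc.mpr ⟨by omega, by omega⟩)).1
  -- G bounds
  have hGfin : ((fun t => lpnorm ps (gradient ψ (y t))) '' Set.Icc 1 (T + 1)).Finite :=
    (Set.finite_Icc _ _).image _
  have hGle : ∀ t, 1 ≤ t → t ≤ T + 1 → lpnorm ps (gradient ψ (y t)) ≤ G := by
    intro t h1 h2
    exact le_csSup hGfin.bddAbove ⟨t, ⟨h1, h2⟩, rfl⟩
  have hG0 : 0 ≤ G := le_trans (lpnorm_nonneg _ _) (hGle 1 le_rfl (by omega))
  -- F bounds
  have hψc : ContinuousOn ψ C := fun x hx =>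
    ((hdiff x (hCU hx)).continuousAt).continuousWithinAt
  have hcomp : IsCompact (ψ '' C) := hCcomp.image_of_continuousOn hψc
  have hsup : ψ (v (T + 1)) ≤ sSup (ψ '' C) :=
    le_csSup hcomp.bddAbove ⟨v (T + 1), hv (T + 1) (Finset.mem_Icc.mpr ⟨by omega, le_rfl⟩), rfl⟩
  have hinf : sInf (ψ '' C) ≤ ψ (v 1) :=
    csInf_le hcomp.bddBelow ⟨v 1, hv 1 (Finset.mem_Icc.mpr ⟨le_rfl, by omega⟩), rfl⟩
  -- nonnegativity of final Bregman divergence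
  have hbregnn : ∀ a ∈ C, ∀ b ∈ C, 0 ≤ breg ψ a b := by
    intro a ha b hb
    have h := hsc a (hCU ha) b (hCU hb)
    have h2 : 0 ≤ lam / 2 * (lpnorm p (a - b)) ^ 2 := by positivity
    simp only [breg]; linarith
  -- per-step inequality
  have key : ∀ t ∈ Finset.Icc 1 T, ⟪g t, y t - v t⟫ ≤
      η / (2 * lam) * (lpnorm ps (g t)) ^ 2
      + (1 / η) * (breg ψ (v t) (y t) - breg ψ (v (t + 1)) (y (t + 1)))
      + (1 / η) * (ψ (v (t + 1)) - ψ (v t))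
      + (G / η) * lpnorm p (v t - v (t + 1)) := by
    intro t ht
    obtain ⟨ht1, ht2⟩ := Finset.mem_Icc.mp ht
    have hwC : y t ∈ C := hyC t ht1 (by omega)
    have hxC : y (t + 1) ∈ C := (hstep t ht).1
    have hvt : v t ∈ C := hv t (Finset.mem_Icc.mpr ⟨ht1, by omega⟩)
    have hvt1 : v (t + 1) ∈ C := hv (t + 1) (Finset.mem_Icc.mpr ⟨by omega, by omega⟩)
    have hVI := variational hCconv hCU hdiff (η := η) (g t) (y (t + 1)) (y t) (v t)
      hxC hvt (hstep t ht).2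
    have h3pt : ⟪gradient ψ (y (t + 1)), v t - y (t + 1)⟫
        - ⟪gradient ψ (y t), v t - y (t + 1)⟫
        = breg ψ (v t) (y t) - breg ψ (v t) (y (t + 1)) - breg ψ (y (t + 1)) (y t) := by
      simp only [breg, inner_sub_right]; ring
    have h2 : ⟪g t, y (t + 1) - v t⟫ ≤ (1 / η) * (breg ψ (v t) (y t)
        - breg ψ (v t) (y (t + 1)) - breg ψ (y (t + 1)) (y t)) := by
      rw [← h3pt]
      simp only [inner_sub_right] at hVI ⊢
      linarith
    have hH : ⟪g t, y t - y (t + 1)⟫ ≤ lpnorm ps (g t) * lpnorm p (y t - y (t + 1)) :=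
      holder hp hconj _ _
    have hY : lpnorm ps (g t) * lpnorm p (y t - y (t + 1)) ≤
        η / (2 * lam) * (lpnorm ps (g t)) ^ 2
        + lam / (2 * η) * (lpnorm p (y t - y (t + 1))) ^ 2 := by
      set A := lpnorm ps (g t)
      set B := lpnorm p (y t - y (t + 1))
      have hq : η / (2 * lam) * A ^ 2 + lam / (2 * η) * B ^ 2 - A * B
          = (η * A - lam * B) ^ 2 / (2 * lam * η) := by
        field_simp; ring
      have := div_nonneg (sq_nonneg (η * A - lam * B))
        (by positivity : (0:ℝ) ≤ 2 * lam * η)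
      linarith
    have hsc' : lam / 2 * (lpnorm p (y t - y (t + 1))) ^ 2 ≤ breg ψ (y (t + 1)) (y t) := by
      have h := hsc (y (t + 1)) (hCU hxC) (y t) (hCU hwC)
      rw [lpnorm_sub_comm]
      simp only [breg]; linarith
    have hG' : ⟪gradient ψ (y (t + 1)), v t - v (t + 1)⟫ ≤ G * lpnorm p (v t - v (t + 1)) := by
      have h1 := holder hp hconj (gradient ψ (y (t + 1))) (v t - v (t + 1))
      exact h1.trans (mul_le_mul_of_nonneg_right (hGle (t + 1) (by omega) (by omega))
        (lpnorm_nonneg _ _))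
    have h5 : breg ψ (v (t + 1)) (y (t + 1)) - breg ψ (v t) (y (t + 1)) ≤
        ψ (v (t + 1)) - ψ (v t) + G * lpnorm p (v t - v (t + 1)) := by
      simp only [inner_sub_right] at hG'
      simp only [breg, inner_sub_right]
      linarith
    have mulle : ∀ {A B : ℝ}, A ≤ B → (1 / η) * A ≤ (1 / η) * B := fun hAB =>
      mul_le_mul_of_nonneg_left hAB (by positivity)
    have hsc'' := mulle hsc'
    have h5' := mulle h5
    have hsplit : ⟪g t, y t - v t⟫ = ⟪g t, y t - y (t + 1)⟫ + ⟪g t, y (t + 1) - v t⟫ := by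
      simp only [inner_sub_right]; ring
    have hHY := hH.trans hY
    have eq1 : lam / (2 * η) * (lpnorm p (y t - y (t + 1))) ^ 2
        = (1 / η) * (lam / 2 * (lpnorm p (y t - y (t + 1))) ^ 2) := by ring
    have eq2 : G / η * lpnorm p (v t - v (t + 1)) = (1 / η) * (G * lpnorm p (v t - v (t + 1))) := by
      ring
    rw [hsplit]
    linarith
  -- sum everything
  have hsum : ∑ t ∈ Finset.Icc 1 T, ⟪g t, y t - v t⟫ ≤
      η / (2 * lam) * ∑ t ∈ Finset.Icc 1 T, (lpnorm ps (g t)) ^ 2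
      + (1 / η) * (breg ψ (v 1) (y 1) - breg ψ (v (T + 1)) (y (T + 1)))
      + (1 / η) * (ψ (v (T + 1)) - ψ (v 1))
      + (G / η) * ∑ t ∈ Finset.Icc 1 T, lpnorm p (v t - v (t + 1)) := by
    calc ∑ t ∈ Finset.Icc 1 T, ⟪g t, y t - v t⟫
        ≤ ∑ t ∈ Finset.Icc 1 T, (η / (2 * lam) * (lpnorm ps (g t)) ^ 2
          + (1 / η) * (breg ψ (v t) (y t) - breg ψ (v (t + 1)) (y (t + 1)))
          + (1 / η) * (ψ (v (t + 1)) - ψ (v t))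
          + (G / η) * lpnorm p (v t - v (t + 1))) := Finset.sum_le_sum key
      _ = _ := by
          simp only [Finset.sum_add_distrib, ← Finset.mul_sum]
          rw [tele (fun t => breg ψ (v t) (y t)) T, tele' (fun t => ψ (v t)) T]
  have hblast : 0 ≤ breg ψ (v (T + 1)) (y (T + 1)) :=
    hbregnn (v (T + 1)) (hv (T + 1) (Finset.mem_Icc.mpr ⟨by omega, le_rfl⟩))
      (y (T + 1)) (hyC (T + 1) (by omega) le_rfl)
  have mulle : ∀ {A B : ℝ}, A ≤ B → (1 / η) * A ≤ (1 / η) * B := fun hAB =>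
    mul_le_mul_of_nonneg_left hAB (by positivity)
  have e1 := mulle (by linarith : breg ψ (v 1) (y 1) - breg ψ (v (T + 1)) (y (T + 1)) ≤
    breg ψ (v 1) (y 1))
  have e2 := mulle (by linarith : ψ (v (T + 1)) - ψ (v 1) ≤ sSup (ψ '' C) - sInf (ψ '' C))
  have hdiv : (sSup (ψ '' C) - sInf (ψ '' C) + breg ψ (v 1) (y 1)) / η
      = (1 / η) * (sSup (ψ '' C) - sInf (ψ '' C)) + (1 / η) * breg ψ (v 1) (y 1) := by
    ring
  rw [hdiv]
  linarith
end
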